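/- arXiv:1407.7604 — 2 statements merged into one kernel-verified Lean document; each statement's English description precedes it below -/
import Mathlib

section
/- Let G be a finite simple connected graph with maximum degree at most 4, not isomorphic to C_{2,5}, such that ν_s(G) < n(G)/9 and every induced subgraph G' of G on a proper subset of the vertices satisfies ν_s(G') ≥ (n(G') − i(G'))/9. Then no two distinct end-vertices of G have a common neighbor. -/
open SimpleGraph

/-- An induced matching of a simple graph `G`: a set of edges of `G` such that no two
distinct edges share an endpoint, and no edge of `G` joins an endpoint of one edge of
the matching to an endpoint of another. -/
def IsInducedMatching {V : Type*} (G : SimpleGraph V) (M : Finset (Sym2 V)) : Prop :=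
  (↑M : Set (Sym2 V)) ⊆ G.edgeSet ∧
    ∀ e ∈ M, ∀ f ∈ M, e ≠ f → ∀ a ∈ e, ∀ b ∈ f, a ≠ b ∧ ¬ G.Adj a b

/-- The strong matching number `ν_s(G)`: the maximum size of an induced matching of `G`. -/
noncomputable def strongMatchingNumber {V : Type*} [Fintype V] (G : SimpleGraph V) : ℕ :=
  sSup {n : ℕ | ∃ M : Finset (Sym2 V), IsInducedMatching G M ∧ M.card = n}

/-- The number of isolated vertices of `G`. -/
noncomputable def isolatedCount {V : Type*} [Fintype V] (G : SimpleGraph V) : ℕ :=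
  Set.ncard {v : V | ∀ w, ¬ G.Adj v w}

/-- The graph `C_{2,5}` obtained from the 5-cycle by replacing each vertex with two
nonadjacent vertices; two vertices in different pairs are adjacent iff the corresponding
vertices of `C_5` are adjacent. -/
def C25 : SimpleGraph (Fin 5 × Fin 2) where
  Adj x y := x.1 + 1 = y.1 ∨ y.1 + 1 = x.1
  symm := ⟨fun _ _ h => Or.symm h⟩
  loopless := ⟨by intro x; revert x; decide⟩

lemma aux_empty_matching {V : Type*} (G : SimpleGraph V) :
    IsInducedMatching G (∅ : Finset (Sym2 V)) := by
  constructor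
  · simp
  · intro e he; simp at he

lemma aux_matching_le_smn {V : Type*} [Fintype V] (G : SimpleGraph V) (M : Finset (Sym2 V))
    (h : IsInducedMatching G M) : M.card ≤ strongMatchingNumber G := by
  classical
  refine le_csSup ⟨Fintype.card (Sym2 V), ?_⟩ ⟨M, h, rfl⟩
  rintro n ⟨M', -, hc⟩
  exact hc ▸ M'.card_le_univ

lemma aux_smn_exists {V : Type*} [Fintype V] (G : SimpleGraph V) :
    ∃ M : Finset (Sym2 V), IsInducedMatching G M ∧ M.card = strongMatchingNumber G := by
  classical
  have hne : ({n | ∃ M : Finset (Sym2 V), IsInducedMatching G M ∧ M.card = n}).Nonempty :=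
    ⟨0, ∅, aux_empty_matching G, rfl⟩
  have hbdd : BddAbove {n | ∃ M : Finset (Sym2 V), IsInducedMatching G M ∧ M.card = n} :=
    ⟨Fintype.card (Sym2 V), by rintro n ⟨M', -, hc⟩; exact hc ▸ M'.card_le_univ⟩
  exact Nat.sSup_mem hne hbdd

lemma aux_lift_lemma {V : Type*} [Fintype V] (G : SimpleGraph V)
    (y u : V) (hadj : G.Adj y u) (hpend : ∀ z, G.Adj u z → z = y)
    (S : Finset V) (hS : ∀ w, w ∈ S ↔ ¬(w = y ∨ G.Adj y w)) :
    strongMatchingNumber (G.induce (↑S : Set V)) + 1 ≤ strongMatchingNumber G := by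
  classical
  obtain ⟨M, hM, hMcard⟩ := aux_smn_exists (G.induce (↑S : Set V))
  set f : Sym2 (↑S : Set V) → Sym2 V := Sym2.map Subtype.val with hf
  have hfinj : Function.Injective f := Sym2.map.injective Subtype.val_injective
  have hmem : ∀ e ∈ M.image f, ∀ a ∈ e, a ∈ S := by
    intro e he a ha
    obtain ⟨e', he', rfl⟩ := Finset.mem_image.mp he
    obtain ⟨a', ha', rfl⟩ := Sym2.mem_map.mp ha
    exact a'.2
  have hSfacts : ∀ b ∈ S, b ≠ y ∧ ¬ G.Adj y b := by
    intro b hb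
    have := (hS b).mp hb
    push_neg at this
    exact this
  have hyu : s(y, u) ∉ M.image f := by
    intro h
    have := hmem _ h y (by simp)
    exact ((hS y).mp this) (Or.inl rfl)
  have haux : ∀ a, (a = y ∨ a = u) → ∀ b ∈ S, a ≠ b ∧ ¬ G.Adj a b := by
    intro a ha b hb
    obtain ⟨hby, hbadj⟩ := hSfacts b hb
    rcases ha with rfl | rfl
    · exact ⟨fun h => hby h.symm, hbadj⟩
    · refine ⟨?_, ?_⟩
      · rintro rfl; exact hbadj hadj
      · intro h; exact hby (hpend b h)
  set N : Finset (Sym2 V) := insert s(y, u) (M.image f) with hN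
  have hNmatch : IsInducedMatching G N := by
    constructor
    · intro e he
      rcases Finset.mem_insert.mp he with rfl | heM
      · exact G.mem_edgeSet.mpr hadj
      · obtain ⟨e', he', rfl⟩ := Finset.mem_image.mp heM
        have h1 : e' ∈ (G.induce (↑S : Set V)).edgeSet := hM.1 he'
        revert h1
        induction e' using Sym2.ind with
        | _ a b => intro h1; simpa [hf] using h1
    · intro e he g hg hne a ha b hb
      rcases Finset.mem_insert.mp he with rfl | heM <;>
        rcases Finset.mem_insert.mp hg with rfl | hgM
      · exact absurd rfl hne
      · exact haux a (Sym2.mem_iff.mp ha) b (hmem _ hgM b hb)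
      · have h := haux b (Sym2.mem_iff.mp hb) a (hmem _ heM a ha)
        exact ⟨h.1.symm, fun hadj' => h.2 hadj'.symm⟩
      · obtain ⟨e', he', rfl⟩ := Finset.mem_image.mp heM
        obtain ⟨g', hg', rfl⟩ := Finset.mem_image.mp hgM
        have hne' : e' ≠ g' := fun h => hne (by rw [h])
        obtain ⟨a', ha', rfl⟩ := Sym2.mem_map.mp ha
        obtain ⟨b', hb', rfl⟩ := Sym2.mem_map.mp hb
        have h := hM.2 e' he' g' hg' hne' a' ha' b' hb'
        exact ⟨fun hh => h.1 (Subtype.ext hh), fun hh => h.2 hh⟩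
  have hcard : N.card = M.card + 1 := by
    rw [hN, Finset.card_insert_of_notMem hyu, Finset.card_image_of_injective _ hfinj]
  have := aux_matching_le_smn G N hNmatch
  omega

lemma aux_iso_le {V : Type*} [Fintype V] (G : SimpleGraph V) (S T : Finset V)
    (hT : ∀ w ∈ S, (∀ z ∈ S, ¬ G.Adj w z) → w ∈ T) :
    isolatedCount (G.induce (↑S : Set V)) ≤ T.card := by
  classical
  have hsub : Subtype.val '' {v : (↑S : Set V) | ∀ w, ¬ (G.induce (↑S : Set V)).Adj v w}
      ⊆ (↑T : Set V) := by
    rintro x ⟨v, hv, rfl⟩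
    refine hT ↑v v.2 ?_
    intro z hz hadj
    exact hv ⟨z, hz⟩ hadj
  calc isolatedCount (G.induce (↑S : Set V))
      = (Subtype.val '' {v : (↑S : Set V) | ∀ w, ¬ (G.induce (↑S : Set V)).Adj v w}).ncard :=
        (Set.ncard_image_of_injective _ Subtype.val_injective).symm
    _ ≤ (↑T : Set V).ncard := Set.ncard_le_ncard hsub (Set.toFinite _)
    _ = T.card := Set.ncard_coe_finset T

lemma aux_master {V : Type*} [Fintype V] [DecidableEq V] (G : SimpleGraph V)
    [DecidableRel G.Adj]
    (hsmall : (strongMatchingNumber G : ℚ) < (Fintype.card V : ℚ) / 9)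
    (hmin : ∀ s : Finset V, s ⊂ Finset.univ →
      ((s.card : ℚ) - (isolatedCount (G.induce (↑s : Set V)) : ℚ)) / 9 ≤
        strongMatchingNumber (G.induce (↑s : Set V)))
    (y u : V) (hadj : G.Adj y u) (hpend : ∀ z, G.Adj u z → z = y) :
    9 ≤ G.degree y + isolatedCount
      (G.induce (↑(Finset.univ \ insert y (G.neighborFinset y)) : Set V)) := by
  classical
  set S : Finset V := Finset.univ \ insert y (G.neighborFinset y) with hSdef
  have hmemS : ∀ w, w ∈ S ↔ ¬(w = y ∨ G.Adj y w) := by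
    intro w
    simp [hSdef, Finset.mem_sdiff, Finset.mem_insert, mem_neighborFinset]
  have hySnot : y ∉ S := fun h => ((hmemS y).mp h) (Or.inl rfl)
  have hss : S ⊂ Finset.univ :=
    Finset.ssubset_univ_iff.mpr (fun h => hySnot (h ▸ Finset.mem_univ y))
  have hTcard : (insert y (G.neighborFinset y)).card = G.degree y + 1 := by
    rw [Finset.card_insert_of_notMem (G.notMem_neighborFinset_self y),
      G.card_neighborFinset_eq_degree]
  have hTle : (insert y (G.neighborFinset y)).card ≤ Fintype.card V := Finset.card_le_univ _
  have hcardS : S.card + (G.degree y + 1) = Fintype.card V := by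
    rw [hSdef, Finset.card_sdiff_of_subset (Finset.subset_univ _), hTcard, Finset.card_univ]
    omega
  have h1 := hmin S hss
  have h2 := aux_lift_lemma G y u hadj hpend S hmemS
  set i := isolatedCount (G.induce (↑S : Set V))
  set m := strongMatchingNumber (G.induce (↑S : Set V))
  have h2q : (m : ℚ) + 1 ≤ (strongMatchingNumber G : ℚ) := by exact_mod_cast h2
  have hcardq : (S.card : ℚ) = (Fintype.card V : ℚ) - (G.degree y : ℚ) - 1 := by
    have := hcardS
    push_cast [← this]
    ring
  have hfin : (8 : ℚ) < (G.degree y : ℚ) + (i : ℚ) := by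
    rw [hcardq] at h1
    linarith
  have : (8 : ℕ) < G.degree y + i := by exact_mod_cast hfin
  omega

/-- Claim about a minimum counterexample to Theorem 1'. -/
theorem claim2_no_two_endvertices_share_neighbor
    {V : Type*} [Fintype V] (G : SimpleGraph V) [DecidableRel G.Adj]
    (hconn : G.Connected) (hdeg : ∀ v, G.degree v ≤ 4)
    (hC25 : ¬ Nonempty (G ≃g C25))
    (hsmall : (strongMatchingNumber G : ℚ) < (Fintype.card V : ℚ) / 9)
    (hmin : ∀ s : Finset V, s ⊂ Finset.univ →
      ((s.card : ℚ) - (isolatedCount (G.induce (↑s : Set V)) : ℚ)) / 9 ≤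
        strongMatchingNumber (G.induce (↑s : Set V))) :
    ∀ u₁ u₂ v : V, u₁ ≠ u₂ → G.degree u₁ = 1 → G.degree u₂ = 1 →
      G.Adj v u₁ → G.Adj v u₂ → False := by
  classical
  intro u₁ u₂ v hne hd1 hd2 hv1 hv2
  -- unique neighbor of a pendant vertex
  have huniq : ∀ w x : V, G.degree w = 1 → G.Adj w x → ∀ z, G.Adj w z → z = x := by
    intro w x hdw hwx z hwz
    have hcard : (G.neighborFinset w).card = 1 := by
      rw [G.card_neighborFinset_eq_degree]; exact hdw
    obtain ⟨a, ha⟩ := Finset.card_eq_one.mp hcard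
    have hx : x ∈ G.neighborFinset w := (G.mem_neighborFinset _ _).mpr hwx
    have hz : z ∈ G.neighborFinset w := (G.mem_neighborFinset _ _).mpr hwz
    rw [ha, Finset.mem_singleton] at hx hz
    rw [hz, hx]
  have hpend1 : ∀ z, G.Adj u₁ z → z = v := huniq u₁ v hd1 hv1.symm
  have hpend2 : ∀ z, G.Adj u₂ z → z = v := huniq u₂ v hd2 hv2.symm
  -- the graph has more than 9 vertices
  have hone : 1 ≤ strongMatchingNumber G := by
    have hmatch : IsInducedMatching G {s(v, u₁)} := by
      constructor
      · intro e he
        simp only [Finset.coe_singleton, Set.mem_singleton_iff] at he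
        rw [he]
        exact G.mem_edgeSet.mpr hv1
      · intro e he g hg hnef
        rw [Finset.mem_singleton] at he hg
        exact absurd (he.trans hg.symm) hnef
    have := aux_matching_le_smn G {s(v, u₁)} hmatch
    simpa using this
  have hn9 : 9 < Fintype.card V := by
    have h1q : (1 : ℚ) ≤ (strongMatchingNumber G : ℚ) := by exact_mod_cast hone
    have : (9 : ℚ) < (Fintype.card V : ℚ) := by linarith [hsmall]
    exact_mod_cast this
  -- minimum degree at least one
  have hmindeg : ∀ w : V, ∃ z, G.Adj w z := by
    intro w
    obtain ⟨z, hz⟩ := Fintype.exists_ne_of_one_lt_card (by omega) w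
    obtain ⟨p⟩ := hconn.preconnected w z
    cases p with
    | nil => exact absurd rfl hz
    | cons h _ => exact ⟨_, h⟩
  set f : V → V := fun w => Classical.choose (hmindeg w) with hfdef
  have hfadj : ∀ w, G.Adj w (f w) := fun w => Classical.choose_spec (hmindeg w)
  -- the "potential isolated vertices" finset
  set H : V → Finset V := fun y => Finset.univ.filter
    (fun w => ¬(w = y ∨ G.Adj y w) ∧ ∀ z, G.Adj w z → (z = y ∨ G.Adj y z)) with hHdef
  have hHprop : ∀ y w, w ∈ H y ↔
      (¬(w = y ∨ G.Adj y w) ∧ ∀ z, G.Adj w z → (z = y ∨ G.Adj y z)) := by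
    intro y w
    simp [hHdef]
  -- master inequality, in terms of H
  have key : ∀ y w', G.Adj y w' → (∀ z, G.Adj w' z → z = y) →
      9 ≤ G.degree y + (H y).card := by
    intro y w' hadj hpend
    have hm := aux_master G hsmall hmin y w' hadj hpend
    have hmemS : ∀ w, w ∈ Finset.univ \ insert y (G.neighborFinset y) ↔
        ¬(w = y ∨ G.Adj y w) := by
      intro w
      simp [Finset.mem_sdiff, Finset.mem_insert, mem_neighborFinset]
    have hi : isolatedCount
        (G.induce (↑(Finset.univ \ insert y (G.neighborFinset y)) : Set V)) ≤ (H y).card := by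
      apply aux_iso_le
      intro w hw hiso
      rw [hHprop]
      refine ⟨(hmemS w).mp hw, ?_⟩
      intro z hz
      by_contra h
      exact hiso z ((hmemS z).mpr h) hz
    omega
  have hH5 : ∀ y w', G.Adj y w' → (∀ z, G.Adj w' z → z = y) → 5 ≤ (H y).card := by
    intro y w' h1 h2
    have := key y w' h1 h2
    have := hdeg y
    omega
  -- |H v| ≥ 5
  have hHv5 : 5 ≤ (H v).card := hH5 v u₁ hv1 hpend1
  -- the set X of non-pendant neighbors of v
  set X : Finset V := ((G.neighborFinset v).erase u₁).erase u₂ with hXdef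
  have hu1mem : u₁ ∈ G.neighborFinset v := (G.mem_neighborFinset _ _).mpr hv1
  have hu2mem : u₂ ∈ (G.neighborFinset v).erase u₁ :=
    Finset.mem_erase.mpr ⟨hne.symm, (G.mem_neighborFinset _ _).mpr hv2⟩
  have hdegv2 : 2 ≤ G.degree v := by
    have hsub : ({u₁, u₂} : Finset V) ⊆ G.neighborFinset v := by
      intro z hz
      rcases Finset.mem_insert.mp hz with rfl | hz
      · exact hu1mem
      · rw [Finset.mem_singleton] at hz
        rw [hz]
        exact (G.mem_neighborFinset _ _).mpr hv2
    have := Finset.card_le_card hsub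
    rw [Finset.card_pair hne, G.card_neighborFinset_eq_degree] at this
    omega
  have hXcard : X.card + 2 = G.degree v := by
    rw [hXdef, Finset.card_erase_of_mem hu2mem, Finset.card_erase_of_mem hu1mem,
      G.card_neighborFinset_eq_degree]
    omega
  have hXadj : ∀ x ∈ X, G.Adj v x := by
    intro x hx
    rw [hXdef] at hx
    exact (G.mem_neighborFinset _ _).mp (Finset.mem_of_mem_erase (Finset.mem_of_mem_erase hx))
  -- neighbors of members of H v lie in X
  have hHvX : ∀ w ∈ H v, ∀ z, G.Adj w z → z ∈ X := by
    intro w hw z hz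
    obtain ⟨hw1, hw2⟩ := (hHprop v w).mp hw
    push_neg at hw1
    rcases hw2 z hz with rfl | hvz
    · exact absurd hz.symm hw1.2
    · refine Finset.mem_erase.mpr ⟨?_, Finset.mem_erase.mpr ⟨?_,
        (G.mem_neighborFinset _ _).mpr hvz⟩⟩
      · rintro rfl
        exact hw1.1 (hpend2 w hz.symm)
      · rintro rfl
        exact hw1.1 (hpend1 w hz.symm)
  have hvnotHv : v ∉ H v := by
    intro h
    exact ((hHprop v v).mp h).1 (Or.inl rfl)
  have hHvne : ∀ w ∈ H v, w ≠ v ∧ ¬ G.Adj v w := by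
    intro w hw
    have := ((hHprop v w).mp hw).1
    push_neg at this
    exact this
  -- fiberwise counting: X has exactly two elements
  have hfX : ∀ w ∈ H v, f w ∈ X := fun w hw => hHvX w hw (f w) (hfadj w)
  have hsum : (H v).card = ∑ x ∈ X, ((H v).filter (fun w => f w = x)).card :=
    Finset.card_eq_sum_card_fiberwise hfX
  have hfiber_le : ∀ x ∈ X, ((H v).filter (fun w => f w = x)).card ≤ 3 := by
    intro x hx
    have hvx : G.Adj v x := hXadj x hx
    have hsub : (H v).filter (fun w => f w = x) ⊆ (G.neighborFinset x).erase v := by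
      intro w hw
      rw [Finset.mem_filter] at hw
      obtain ⟨hwH, hfw⟩ := hw
      have hadjwx : G.Adj w x := hfw ▸ hfadj w
      exact Finset.mem_erase.mpr ⟨(hHvne w hwH).1, (G.mem_neighborFinset _ _).mpr hadjwx.symm⟩
    have h1 := Finset.card_le_card hsub
    rw [Finset.card_erase_of_mem ((G.mem_neighborFinset _ _).mpr hvx.symm),
      G.card_neighborFinset_eq_degree] at h1
    have := hdeg x
    omega
  have hHv_le : (H v).card ≤ X.card * 3 := by
    rw [hsum]
    calc ∑ x ∈ X, ((H v).filter (fun w => f w = x)).card ≤ ∑ _x ∈ X, 3 :=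
          Finset.sum_le_sum hfiber_le
      _ = X.card * 3 := by rw [Finset.sum_const, smul_eq_mul]
  have hX2 : X.card = 2 := by
    have := hdeg v
    omega
  obtain ⟨x₁, x₂, hx12, hXeq⟩ := Finset.card_eq_two.mp hX2
  have hx1X : x₁ ∈ X := by rw [hXeq]; simp
  have hx2X : x₂ ∈ X := by rw [hXeq]; simp
  have hvx1 : G.Adj v x₁ := hXadj x₁ hx1X
  have hvx2 : G.Adj v x₂ := hXadj x₂ hx2X
  -- neighborhood structure of H v relative to x₁, x₂
  have hHv2 : ∀ w ∈ H v, ∀ z, G.Adj w z → z = x₁ ∨ z = x₂ := by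
    intro w hw z hz
    have := hHvX w hw z hz
    rw [hXeq] at this
    simpa using this
  -- every neighbor of v is u₁, u₂, x₁ or x₂
  have hnbv : ∀ z, G.Adj v z → z = u₁ ∨ z = u₂ ∨ z = x₁ ∨ z = x₂ := by
    intro z hz
    by_cases h1 : z = u₁
    · exact Or.inl h1
    by_cases h2 : z = u₂
    · exact Or.inr (Or.inl h2)
    have : z ∈ X := by
      rw [hXdef]
      exact Finset.mem_erase.mpr ⟨h2, Finset.mem_erase.mpr ⟨h1, (G.mem_neighborFinset _ _).mpr hz⟩⟩
    rw [hXeq] at this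
    rcases Finset.mem_insert.mp this with h | h
    · exact Or.inr (Or.inr (Or.inl h))
    · exact Or.inr (Or.inr (Or.inr (Finset.mem_singleton.mp h)))
  -- counting: c₁ + c₂ ≥ 5, cᵢ ≤ 3
  have hc_le : ∀ x, G.Adj v x → (G.neighborFinset x ∩ H v).card ≤ 3 := by
    intro x hvx
    have hsub : G.neighborFinset x ∩ H v ⊆ (G.neighborFinset x).erase v := by
      intro w hw
      rw [Finset.mem_inter] at hw
      exact Finset.mem_erase.mpr ⟨(hHvne w hw.2).1, hw.1⟩
    have h1 := Finset.card_le_card hsub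
    rw [Finset.card_erase_of_mem ((G.mem_neighborFinset _ _).mpr hvx.symm),
      G.card_neighborFinset_eq_degree] at h1
    have := hdeg x
    omega
  have hc1_le := hc_le x₁ hvx1
  have hc2_le := hc_le x₂ hvx2
  have hunion : H v ⊆ (G.neighborFinset x₁ ∩ H v) ∪ (G.neighborFinset x₂ ∩ H v) := by
    intro w hw
    have hfw := hfX w hw
    rw [hXeq] at hfw
    have hadjw : G.Adj w (f w) := hfadj w
    rcases Finset.mem_insert.mp hfw with h | h
    · refine Finset.mem_union_left _ (Finset.mem_inter.mpr ⟨?_, hw⟩)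
      rw [← h]
      exact (G.mem_neighborFinset _ _).mpr hadjw.symm
    · rw [Finset.mem_singleton] at h
      refine Finset.mem_union_right _ (Finset.mem_inter.mpr ⟨?_, hw⟩)
      rw [← h]
      exact (G.mem_neighborFinset _ _).mpr hadjw.symm
  have hc_sum : 5 ≤ (G.neighborFinset x₁ ∩ H v).card + (G.neighborFinset x₂ ∩ H v).card := by
    have h1 := Finset.card_le_card hunion
    have h2 := Finset.card_union_le (G.neighborFinset x₁ ∩ H v) (G.neighborFinset x₂ ∩ H v)
    omega
  -- at most one common neighbor of x₁ and x₂ inside H v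
  have hDone : ∀ w w', w ∈ H v → w' ∈ H v → G.Adj x₁ w → G.Adj x₂ w →
      G.Adj x₁ w' → G.Adj x₂ w' → w = w' := by
    intro w w' hw hw' h1 h2 h1' h2'
    have hD : ((G.neighborFinset x₁ ∩ H v) ∩ (G.neighborFinset x₂ ∩ H v)).card ≤ 1 := by
      have h3 := Finset.card_le_card hunion
      have h4 := Finset.card_union_add_card_inter (G.neighborFinset x₁ ∩ H v)
        (G.neighborFinset x₂ ∩ H v)
      have h5 := Finset.card_union_le (G.neighborFinset x₁ ∩ H v)
        (G.neighborFinset x₂ ∩ H v)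
      omega
    have hwD : w ∈ (G.neighborFinset x₁ ∩ H v) ∩ (G.neighborFinset x₂ ∩ H v) := by
      rw [Finset.mem_inter, Finset.mem_inter, Finset.mem_inter]
      exact ⟨⟨(G.mem_neighborFinset _ _).mpr h1, hw⟩, (G.mem_neighborFinset _ _).mpr h2, hw⟩
    have hw'D : w' ∈ (G.neighborFinset x₁ ∩ H v) ∩ (G.neighborFinset x₂ ∩ H v) := by
      rw [Finset.mem_inter, Finset.mem_inter, Finset.mem_inter]
      exact ⟨⟨(G.mem_neighborFinset _ _).mpr h1', hw'⟩, (G.mem_neighborFinset _ _).mpr h2', hw'⟩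
    exact Finset.card_le_one.mp hD w hwD w' hw'D
  -- each of x₁, x₂ has a pendant neighbor inside H v
  have hpendget : ∀ x x' : V, x ≠ x' →
      (∀ w ∈ H v, ∀ z, G.Adj w z → z = x ∨ z = x') →
      2 ≤ (G.neighborFinset x ∩ H v).card →
      (∀ w w', w ∈ H v → w' ∈ H v → G.Adj x w → G.Adj x' w →
        G.Adj x w' → G.Adj x' w' → w = w') →
      ∃ w ∈ H v, G.Adj x w ∧ ∀ z, G.Adj w z → z = x := by
    intro x x' hxx' hnbr hc2 hdbl
    obtain ⟨w, hw, w', hw', hww'⟩ := Finset.one_lt_card.mp (show 1 < (G.neighborFinset x ∩ H v).card by omega)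
    rw [Finset.mem_inter] at hw hw'
    have hpick : ∃ w₀, w₀ ∈ H v ∧ G.Adj x w₀ ∧ ¬ G.Adj x' w₀ := by
      by_cases h1 : G.Adj x' w
      · by_cases h2 : G.Adj x' w'
        · exact absurd (hdbl w w' hw.2 hw'.2 ((G.mem_neighborFinset _ _).mp hw.1) h1
            ((G.mem_neighborFinset _ _).mp hw'.1) h2) hww'
        · exact ⟨w', hw'.2, (G.mem_neighborFinset _ _).mp hw'.1, h2⟩
      · exact ⟨w, hw.2, (G.mem_neighborFinset _ _).mp hw.1, h1⟩
    obtain ⟨w₀, hw₀H, hw₀x, hw₀x'⟩ := hpick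
    refine ⟨w₀, hw₀H, hw₀x, ?_⟩
    intro z hz
    rcases hnbr w₀ hw₀H z hz with rfl | rfl
    · rfl
    · exact absurd hz.symm hw₀x'
  -- the main symmetric bound: cᵢ ≤ 2
  have hCX : ∀ x x' : V, x ≠ x' → G.Adj v x → G.Adj v x' →
      (∀ w ∈ H v, ∀ z, G.Adj w z → z = x ∨ z = x') →
      (∀ z, G.Adj v z → z = u₁ ∨ z = u₂ ∨ z = x ∨ z = x') →
      (∃ w ∈ H v, G.Adj x w ∧ ∀ z, G.Adj w z → z = x) →
      (∃ w ∈ H v, G.Adj x' w ∧ ∀ z, G.Adj w z → z = x') →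
      (G.neighborFinset x ∩ H v).card ≤ 2 := by
    intro x x' hxx' hvx hvx' hnbr hnbv' hpx hpx'
    obtain ⟨wx, hwxH, hwxA, hwxP⟩ := hpx
    obtain ⟨wx', hwx'H, hwx'A, hwx'P⟩ := hpx'
    have h9 := key x wx hwxA hwxP
    have h5 : 5 ≤ (H x).card := by
      have := hdeg x
      omega
    have hxnotHv : x ∉ H v := by
      intro h
      exact (hHvne x h).2 hvx
    -- no member of H x equals x'
    have claimB : ∀ w', w' ∈ H x → w' ≠ x' := by
      intro w' hw' heq
      have hp := (hHprop x w').mp hw'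
      have hadj' : G.Adj w' wx' := heq ▸ hwx'A
      rcases hp.2 wx' hadj' with h | h
      · rw [h] at hwx'H
        exact hxnotHv hwx'H
      · exact hxx' (hwx'P x h.symm)
    set O : Finset V := ((G.neighborFinset x).erase v) \ H v with hOdef
    have hsubH : H x ⊆ insert u₁ (insert u₂
        (O.biUnion (fun z => (G.neighborFinset z).erase x))) := by
      intro w' hw'
      have hp := (hHprop x w').mp hw'
      have hp1 : w' ≠ x ∧ ¬ G.Adj x w' := by
        have := hp.1
        push_neg at this
        exact this
      have hz : G.Adj w' (f w') := hfadj w'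
      rcases hp.2 (f w') hz with heq | hxz
      · rw [heq] at hz
        exact absurd hz.symm hp1.2
      have hz_nbx : f w' ∈ G.neighborFinset x := (G.mem_neighborFinset _ _).mpr hxz
      by_cases hzv : f w' = v
      · rw [hzv] at hz
        rcases hnbv' w' hz.symm with rfl | rfl | rfl | rfl
        · exact Finset.mem_insert_self _ _
        · exact Finset.mem_insert_of_mem (Finset.mem_insert_self _ _)
        · exact absurd rfl hp1.1
        · exact absurd rfl (claimB _ hw')
      by_cases hzH : f w' ∈ H v
      · rcases hnbr (f w') hzH w' hz.symm with rfl | rfl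
        · exact absurd rfl hp1.1
        · exact absurd rfl (claimB _ hw')
      · refine Finset.mem_insert_of_mem (Finset.mem_insert_of_mem ?_)
        rw [Finset.mem_biUnion]
        refine ⟨f w', ?_, ?_⟩
        · rw [hOdef, Finset.mem_sdiff]
          exact ⟨Finset.mem_erase.mpr ⟨hzv, hz_nbx⟩, hzH⟩
        · exact Finset.mem_erase.mpr ⟨hp1.1, (G.mem_neighborFinset _ _).mpr hz.symm⟩
    have hOcard : (H x).card ≤ 2 + 3 * O.card := by
      have h1 := Finset.card_le_card hsubH
      have h2 := Finset.card_insert_le u₁ (insert u₂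
        (O.biUnion (fun z => (G.neighborFinset z).erase x)))
      have h3 := Finset.card_insert_le u₂
        (O.biUnion (fun z => (G.neighborFinset z).erase x))
      have h4 : (O.biUnion (fun z => (G.neighborFinset z).erase x)).card ≤ 3 * O.card := by
        calc (O.biUnion (fun z => (G.neighborFinset z).erase x)).card
            ≤ ∑ z ∈ O, ((G.neighborFinset z).erase x).card := Finset.card_biUnion_le
          _ ≤ ∑ _z ∈ O, 3 := by
              apply Finset.sum_le_sum
              intro z hzO
              rw [hOdef, Finset.mem_sdiff] at hzO
              have hzx : z ∈ G.neighborFinset x := Finset.mem_of_mem_erase hzO.1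
              have hxz : G.Adj x z := (G.mem_neighborFinset _ _).mp hzx
              have hcard := Finset.card_erase_of_mem
                ((G.mem_neighborFinset _ _).mpr hxz.symm)
              rw [G.card_neighborFinset_eq_degree] at hcard
              have := hdeg z
              omega
          _ = 3 * O.card := by rw [Finset.sum_const, smul_eq_mul]; ring
      omega
    have hO1 : 1 ≤ O.card := by omega
    -- disjoint counting inside the neighborhood of x
    have hdisj_sub : insert v ((G.neighborFinset x ∩ H v) ∪ O) ⊆ G.neighborFinset x := by
      intro z hz
      rcases Finset.mem_insert.mp hz with rfl | hz
      · exact (G.mem_neighborFinset _ _).mpr hvx.symm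
      rcases Finset.mem_union.mp hz with hz | hz
      · exact (Finset.mem_inter.mp hz).1
      · rw [hOdef, Finset.mem_sdiff] at hz
        exact Finset.mem_of_mem_erase hz.1
    have hvnotin : v ∉ (G.neighborFinset x ∩ H v) ∪ O := by
      intro h
      rcases Finset.mem_union.mp h with h | h
      · exact hvnotHv (Finset.mem_inter.mp h).2
      · rw [hOdef, Finset.mem_sdiff] at h
        exact (Finset.mem_erase.mp h.1).1 rfl
    have hdisj : Disjoint (G.neighborFinset x ∩ H v) O := by
      rw [Finset.disjoint_left]
      intro z hz hzO
      rw [hOdef, Finset.mem_sdiff] at hzO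
      exact hzO.2 (Finset.mem_inter.mp hz).2
    have hcount : 1 + ((G.neighborFinset x ∩ H v).card + O.card) ≤ G.degree x := by
      have h1 := Finset.card_le_card hdisj_sub
      rw [Finset.card_insert_of_notMem hvnotin, Finset.card_union_of_disjoint hdisj,
        G.card_neighborFinset_eq_degree] at h1
      omega
    have := hdeg x
    omega
  -- obtain pendants for both x₁ and x₂
  have hc1_ge : 2 ≤ (G.neighborFinset x₁ ∩ H v).card := by omega
  have hc2_ge : 2 ≤ (G.neighborFinset x₂ ∩ H v).card := by omega
  have hHv2' : ∀ w ∈ H v, ∀ z, G.Adj w z → z = x₂ ∨ z = x₁ := by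
    intro w hw z hz
    rcases hHv2 w hw z hz with h | h
    · exact Or.inr h
    · exact Or.inl h
  have hDone' : ∀ w w', w ∈ H v → w' ∈ H v → G.Adj x₂ w → G.Adj x₁ w →
      G.Adj x₂ w' → G.Adj x₁ w' → w = w' := by
    intro w w' h1 h2 h3 h4 h5 h6
    exact hDone w w' h1 h2 h4 h3 h6 h5
  have hp1 := hpendget x₁ x₂ hx12 hHv2 hc1_ge hDone
  have hp2 := hpendget x₂ x₁ hx12.symm hHv2' hc2_ge hDone'
  have hnbv' : ∀ z, G.Adj v z → z = u₁ ∨ z = u₂ ∨ z = x₂ ∨ z = x₁ := by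
    intro z hz
    rcases hnbv z hz with h | h | h | h
    · exact Or.inl h
    · exact Or.inr (Or.inl h)
    · exact Or.inr (Or.inr (Or.inr h))
    · exact Or.inr (Or.inr (Or.inl h))
  have hb1 := hCX x₁ x₂ hx12 hvx1 hvx2 hHv2 hnbv hp1 hp2
  have hb2 := hCX x₂ x₁ hx12.symm hvx2 hvx1 hHv2' hnbv' hp2 hp1
  omega
end

section
/- The bound of the main theorem is tight: there exists a finite simple connected graph G with maximum degree at most 4, not isomorphic to C_{2,5}, such that ν_s(G) = n(G)/9. -/
open SimpleGraph

def f9 : Fin 9 → Fin 9 → Bool := fun a b =>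
  decide ((a, b) ∈ [((0:Fin 9),(1:Fin 9)),(1,0),(0,2),(2,0),(1,2),(2,1),
    (0,3),(3,0),(0,4),(4,0),(1,5),(5,1),(1,6),(6,1),(2,7),(7,2),(2,8),(8,2)])

def G9 : SimpleGraph (Fin 9) where
  Adj a b := f9 a b
  symm := ⟨by intro a b; revert a b; decide⟩
  loopless := ⟨by intro a; revert a; decide⟩

instance : DecidableRel G9.Adj := fun a b => inferInstanceAs (Decidable (f9 a b = true))

lemma close9 : ∀ a b c d : Fin 9, G9.Adj a b → G9.Adj c d →
    (a = c ∨ a = d ∨ b = c ∨ b = d ∨ G9.Adj a c ∨ G9.Adj a d ∨ G9.Adj b c ∨ G9.Adj b d) := by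
  decide

lemma G9_reach0 : ∀ v : Fin 9, G9.Reachable 0 v := by
  have h01 : G9.Adj 0 1 := by decide
  have h02 : G9.Adj 0 2 := by decide
  intro v
  fin_cases v
  · exact Reachable.refl _
  · exact h01.reachable
  · exact h02.reachable
  · exact (Adj.reachable (by decide : G9.Adj 0 3))
  · exact (Adj.reachable (by decide : G9.Adj 0 4))
  · exact h01.reachable.trans (Adj.reachable (by decide : G9.Adj 1 5))
  · exact h01.reachable.trans (Adj.reachable (by decide : G9.Adj 1 6))
  · exact h02.reachable.trans (Adj.reachable (by decide : G9.Adj 2 7))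
  · exact h02.reachable.trans (Adj.reachable (by decide : G9.Adj 2 8))

lemma G9_connected : G9.Connected := by
  rw [connected_iff]
  exact ⟨fun u v => (G9_reach0 u).symm.trans (G9_reach0 v), ⟨0⟩⟩

lemma G9_smn : strongMatchingNumber G9 = 1 := by
  have hmem : (1 : ℕ) ∈ {n : ℕ | ∃ M : Finset (Sym2 (Fin 9)),
      IsInducedMatching G9 M ∧ M.card = n} := by
    refine ⟨{s(0, 1)}, ⟨?_, ?_⟩, by simp⟩
    · intro e he
      simp only [Finset.coe_singleton, Set.mem_singleton_iff] at he
      subst he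
      rw [mem_edgeSet]
      decide
    · intro e he f hf hne
      simp only [Finset.mem_singleton] at he hf
      exact absurd (he.trans hf.symm) hne
  have hub : ∀ n ∈ {n : ℕ | ∃ M : Finset (Sym2 (Fin 9)),
      IsInducedMatching G9 M ∧ M.card = n}, n ≤ 1 := by
    rintro n ⟨M, ⟨hsub, hind⟩, rfl⟩
    by_contra h
    push_neg at h
    obtain ⟨e, f, he, hf, hne⟩ := Finset.one_lt_card_iff.mp h
    obtain ⟨a, b, rfl⟩ : ∃ a b, e = s(a, b) := Sym2.ind (fun x y => ⟨x, y, rfl⟩) e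
    obtain ⟨c, d, rfl⟩ : ∃ c d, f = s(c, d) := Sym2.ind (fun x y => ⟨x, y, rfl⟩) f
    have hab : G9.Adj a b := (G9.mem_edgeSet).mp (hsub he)
    have hcd : G9.Adj c d := (G9.mem_edgeSet).mp (hsub hf)
    have hac := hind _ he _ hf hne a (Sym2.mem_mk_left a b) c (Sym2.mem_mk_left c d)
    have had := hind _ he _ hf hne a (Sym2.mem_mk_left a b) d (Sym2.mem_mk_right c d)
    have hbc := hind _ he _ hf hne b (Sym2.mem_mk_right a b) c (Sym2.mem_mk_left c d)
    have hbd := hind _ he _ hf hne b (Sym2.mem_mk_right a b) d (Sym2.mem_mk_right c d)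
    rcases close9 a b c d hab hcd with h | h | h | h | h | h | h | h
    · exact hac.1 h
    · exact had.1 h
    · exact hbc.1 h
    · exact hbd.1 h
    · exact hac.2 h
    · exact had.2 h
    · exact hbc.2 h
    · exact hbd.2 h
  exact le_antisymm (csSup_le ⟨1, hmem⟩ hub) (le_csSup ⟨1, hub⟩ hmem)

lemma G9_deg : ∀ v : Fin 9, (G9.neighborSet v).ncard ≤ 4 := by
  have hd : ∀ v : Fin 9, G9.degree v ≤ 4 := by decide
  intro v
  have : (G9.neighborSet v).ncard = G9.degree v := by
    rw [Set.ncard_eq_toFinset_card', ← neighborFinset_def, ← degree]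
  rw [this]
  exact hd v

/-- The bound of the main theorem is tight: some connected graph with maximum degree at
most 4, not isomorphic to `C_{2,5}`, has strong matching number exactly `n(G)/9`. -/
theorem exists_tight_example :
    ∃ (n : ℕ) (G : SimpleGraph (Fin n)), G.Connected ∧
      (∀ v, (G.neighborSet v).ncard ≤ 4) ∧ ¬ Nonempty (G ≃g C25) ∧
      (strongMatchingNumber G : ℚ) = (n : ℚ) / 9 := by

  refine ⟨9, G9, G9_connected, G9_deg, ?_, ?_⟩
  · rintro ⟨e⟩
    have := Fintype.card_congr e.toEquiv
    simp at this
  · rw [G9_smn]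
    norm_num
end
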